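/- (Bound |Λ^α w_{λ,κ}| ≤ C w_{λ,κ}, stated via second differences.) Let n ≥ 1 be an integer, α ∈ (0,2), λ ∈ (0,1), and κ ≥ 2 an even integer, and assume that either α ≥ 1 or 2λ < α. Let w = w_{λ,κ}. Then there exists a constant C = C(n,α,λ,κ) > 0 such that for all x ∈ ℝⁿ, the integral ∫_{ℝⁿ} |2 w(x) − w(x+y) − w(x−y)| / |y|^{n+α} dy is finite and bounded by C · w(x). In particular the fractional Laplacian Λ^α w(x) = (C_{n,α}/2) ∫_{ℝⁿ} (2 w(x) − w(x+y) − w(x−y)) / |y|^{n+α} dy is given by an absolutely convergent integral and satisfies |Λ^α w(x)| ≤ C' · w(x) for all x. -/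

import Mathlib

open Real MeasureTheory Set Metric Filter
open scoped ENNReal

/-- The Muckenhoupt-type weight `w_{λ,κ}(x) = (1 + |x|^κ)^(−λ/κ)` on `ℝⁿ`. -/
noncomputable def weight (n : ℕ) (lam : ℝ) (kap : ℕ) (x : EuclideanSpace ℝ (Fin n)) : ℝ :=
  (1 + ‖x‖ ^ kap) ^ (-(lam / (kap : ℝ)))

theorem finite_lintegral_rpow_norm_ball {n : ℕ} (hn : 1 ≤ n) {q : ℝ} (hq : -(n : ℝ) < q) :
    (∫⁻ x : EuclideanSpace ℝ (Fin n) in ball 0 1, ENNReal.ofReal (‖x‖ ^ q)) < ∞ := by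
  set E := EuclideanSpace ℝ (Fin n)
  have hfr : Module.finrank ℝ E = n := by simp [E]
  rcases le_or_gt 0 q with hq0 | hq0
  · calc ∫⁻ x : E in ball (0:E) 1, ENNReal.ofReal (‖x‖ ^ q)
        ≤ ∫⁻ _ : E in ball (0:E) 1, 1 := by
          refine setLIntegral_mono' measurableSet_ball fun x hx => ?_
          rw [mem_ball_zero_iff] at hx
          simp only [← ENNReal.ofReal_one]
          exact ENNReal.ofReal_le_ofReal (Real.rpow_le_one (norm_nonneg x) hx.le hq0)
      _ = volume (ball (0:E) 1) := by simp
      _ < ∞ := measure_ball_lt_top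
  · have hqne : q ≠ 0 := hq0.ne
    have hmeas : Measurable fun x : E => ‖x‖ ^ q := by fun_prop
    rw [lintegral_eq_lintegral_meas_le _ (Eventually.of_forall fun x => rpow_nonneg (norm_nonneg x) q)
      (hmeas.aemeasurable)]
    have hbound : ∀ t : ℝ, t ∈ Ioi (0:ℝ) →
        (volume.restrict (ball (0:E) 1)) {a : E | t ≤ ‖a‖ ^ q}
          ≤ volume (Metric.closedBall (0:E) (t ^ q⁻¹)) := by
      intro t ht
      refine (Measure.restrict_le_self _).trans (measure_mono ?_)
      intro a ha
      simp only [mem_setOf_eq] at ha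
      have ha0 : a ≠ 0 := by
        rintro rfl
        rw [norm_zero, Real.zero_rpow hqne] at ha
        exact absurd ha (not_le.mpr ht)
      have hna : 0 < ‖a‖ := norm_pos_iff.mpr ha0
      rw [mem_closedBall_zero_iff]
      exact (Real.le_rpow_inv_iff_of_neg hna ht hq0).mpr ha
    have hbound2 : ∀ t : ℝ, t ∈ Ioi (0:ℝ) →
        (volume.restrict (ball (0:E) 1)) {a : E | t ≤ ‖a‖ ^ q}
          ≤ volume (ball (0:E) 1) := fun t _ =>
      (measure_mono (subset_univ _)).trans_eq (by simp)
    calc ∫⁻ t in Ioi (0:ℝ), (volume.restrict (ball (0:E) 1)) {a : E | t ≤ ‖a‖ ^ q}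
        ≤ (∫⁻ t in Ioc (0:ℝ) 1, (volume.restrict (ball (0:E) 1)) {a : E | t ≤ ‖a‖ ^ q})
          + ∫⁻ t in Ioi (1:ℝ), (volume.restrict (ball (0:E) 1)) {a : E | t ≤ ‖a‖ ^ q} := by
          rw [← lintegral_union measurableSet_Ioi (Ioc_disjoint_Ioi le_rfl)]
          exact lintegral_mono_set Ioi_subset_Ioc_union_Ioi
      _ < ∞ := by
          refine ENNReal.add_lt_top.2 ⟨?_, ?_⟩
          · calc (∫⁻ t in Ioc (0:ℝ) 1, (volume.restrict (ball (0:E) 1)) {a : E | t ≤ ‖a‖ ^ q})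
                ≤ ∫⁻ _ in Ioc (0:ℝ) 1, volume (ball (0:E) 1) := by
                  refine setLIntegral_mono' measurableSet_Ioc fun t ht => hbound2 t ht.1
              _ = volume (ball (0:E) 1) * volume (Ioc (0:ℝ) 1) := by
                  rw [setLIntegral_const]
              _ < ∞ := ENNReal.mul_lt_top measure_ball_lt_top (by simp)
          · calc (∫⁻ t in Ioi (1:ℝ), (volume.restrict (ball (0:E) 1)) {a : E | t ≤ ‖a‖ ^ q})
                ≤ ∫⁻ t in Ioi (1:ℝ), ENNReal.ofReal (t ^ (q⁻¹ * n)) * volume (ball (0:E) 1) := by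
                  refine setLIntegral_mono' measurableSet_Ioi fun t ht => ?_
                  have ht1 : (1:ℝ) < t := ht
                  have htr : 0 ≤ t ^ q⁻¹ := rpow_nonneg (by linarith) _
                  refine (hbound t (by simp; linarith)).trans ?_
                  rw [Measure.addHaar_closedBall _ _ htr, ← Real.rpow_natCast (t ^ q⁻¹),
                    ← Real.rpow_mul (by linarith : (0:ℝ) ≤ t), hfr]
              _ = ENNReal.ofReal ((volume (ball (0:E) 1)).toReal) *
                    ∫⁻ t in Ioi (1:ℝ), ENNReal.ofReal (t ^ (q⁻¹ * n)) := by
                  rw [lintegral_mul_const' _ _ (by exact measure_ball_lt_top.ne),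
                    ENNReal.ofReal_toReal measure_ball_lt_top.ne, mul_comm]
              _ < ∞ := by
                  refine ENNReal.mul_lt_top ENNReal.ofReal_lt_top ?_
                  have hnpos : (0:ℝ) < n := by exact_mod_cast hn
                  have hqinv : q⁻¹ < 0 := inv_neg''.mpr hq0
                  have hlt : q⁻¹ * n < -1 := by
                    have h1 : -q < n := by linarith
                    have h2 : q⁻¹ * n < q⁻¹ * (-q) := by
                      apply mul_lt_mul_of_neg_left _ hqinv
                      linarith
                    rw [mul_neg, inv_mul_cancel₀ hqne] at h2
                    linarith
                  have := (integrableOn_Ioi_rpow_of_lt hlt one_pos).setLIntegral_lt_top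
                  exact lt_of_le_of_lt (le_of_eq rfl) this

lemma weight_pos {n : ℕ} {lam : ℝ} {kap : ℕ} (x : EuclideanSpace ℝ (Fin n)) :
    0 < weight n lam kap x :=
  Real.rpow_pos_of_pos (by positivity) _

lemma add_pow_le' {a b : ℝ} (ha : 0 ≤ a) (hb : 0 ≤ b) (k : ℕ) :
    (a + b) ^ k ≤ 2 ^ k * (a ^ k + b ^ k) := by
  rcases le_total a b with h | h
  · calc (a + b) ^ k ≤ (2 * b) ^ k := by
          apply pow_le_pow_left₀ (by linarith) (by linarith)
      _ = 2 ^ k * b ^ k := by rw [mul_pow]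
      _ ≤ 2 ^ k * (a ^ k + b ^ k) := by
          apply mul_le_mul_of_nonneg_left _ (by positivity)
          nlinarith [pow_nonneg ha k]
  · calc (a + b) ^ k ≤ (2 * a) ^ k := by
          apply pow_le_pow_left₀ (by linarith) (by linarith)
      _ = 2 ^ k * a ^ k := by rw [mul_pow]
      _ ≤ 2 ^ k * (a ^ k + b ^ k) := by
          apply mul_le_mul_of_nonneg_left _ (by positivity)
          nlinarith [pow_nonneg hb k]

lemma base_double {n : ℕ} (kap : ℕ) (x z : EuclideanSpace ℝ (Fin n)) :
    1 + ‖x‖ ^ kap ≤ 2 ^ kap * (1 + ‖z‖ ^ kap) * (1 + ‖x - z‖ ^ kap) := by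
  have h1 : ‖x‖ ≤ ‖z‖ + ‖x - z‖ := by
    calc ‖x‖ = ‖z + (x - z)‖ := by rw [add_sub_cancel]
      _ ≤ ‖z‖ + ‖x - z‖ := norm_add_le _ _
  have h2 : ‖x‖ ^ kap ≤ (‖z‖ + ‖x - z‖) ^ kap :=
    pow_le_pow_left₀ (norm_nonneg _) h1 kap
  have h3 := add_pow_le' (norm_nonneg z) (norm_nonneg (x - z)) kap
  have h4 : (1:ℝ) ≤ 2 ^ kap := one_le_pow₀ (by norm_num)
  have h5 : (0:ℝ) ≤ ‖z‖ ^ kap := by positivity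
  have h6 : (0:ℝ) ≤ ‖x - z‖ ^ kap := by positivity
  nlinarith [mul_nonneg h5 h6]

/-- Doubling property of the weight. -/
lemma weight_double {n : ℕ} {lam : ℝ} {kap : ℕ} (hlam : 0 < lam) (hlk : lam ≤ kap)
    (x z : EuclideanSpace ℝ (Fin n)) :
    weight n lam kap z ≤ 2 ^ kap * weight n lam kap x * (1 + ‖x - z‖ ^ kap) ^ (lam / kap) := by
  have hkap : 0 < (kap : ℝ) := lt_of_lt_of_le hlam hlk
  set d := lam / (kap : ℝ) with hd
  have hd0 : 0 < d := div_pos hlam hkap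
  have hd1 : d ≤ 1 := by
    rw [hd, div_le_one hkap]; exact hlk
  have hxz : (0:ℝ) < 1 + ‖x - z‖ ^ kap := by positivity
  have hzpos : (0:ℝ) < 1 + ‖z‖ ^ kap := by positivity
  have hxpos : (0:ℝ) < 1 + ‖x‖ ^ kap := by positivity
  have key : (1 + ‖x‖ ^ kap) / (2 ^ kap * (1 + ‖x - z‖ ^ kap)) ≤ 1 + ‖z‖ ^ kap := by
    rw [div_le_iff₀ (by positivity)]
    calc 1 + ‖x‖ ^ kap ≤ 2 ^ kap * (1 + ‖z‖ ^ kap) * (1 + ‖x - z‖ ^ kap) :=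
          base_double kap x z
      _ = (1 + ‖z‖ ^ kap) * (2 ^ kap * (1 + ‖x - z‖ ^ kap)) := by ring
  have step : weight n lam kap z ≤
      ((1 + ‖x‖ ^ kap) / (2 ^ kap * (1 + ‖x - z‖ ^ kap))) ^ (-d) := by
    unfold weight
    rw [← hd]
    exact Real.rpow_le_rpow_of_nonpos (by positivity) key (by linarith)
  refine step.trans ?_
  have hB : (0:ℝ) < 2 ^ kap * (1 + ‖x - z‖ ^ kap) := by positivity
  calc ((1 + ‖x‖ ^ kap) / (2 ^ kap * (1 + ‖x - z‖ ^ kap))) ^ (-d)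
      = (1 + ‖x‖ ^ kap) ^ (-d) / (2 ^ kap * (1 + ‖x - z‖ ^ kap)) ^ (-d) :=
        Real.div_rpow (by positivity) (by positivity) (-d)
    _ = (1 + ‖x‖ ^ kap) ^ (-d) * (2 ^ kap * (1 + ‖x - z‖ ^ kap)) ^ d := by
        field_simp [Real.rpow_neg hB.le]
        rw [← Real.rpow_add hB]; simp
    _ = (1 + ‖x‖ ^ kap) ^ (-d) * (((2:ℝ) ^ kap) ^ d * (1 + ‖x - z‖ ^ kap) ^ d) := by
        rw [Real.mul_rpow (by positivity) (by positivity)]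
    _ ≤ (1 + ‖x‖ ^ kap) ^ (-d) * ((2:ℝ) ^ kap * (1 + ‖x - z‖ ^ kap) ^ d) := by
        apply mul_le_mul_of_nonneg_left _ (by positivity)
        apply mul_le_mul_of_nonneg_right _ (by positivity)
        calc ((2:ℝ) ^ kap) ^ d ≤ ((2:ℝ) ^ kap) ^ (1:ℝ) :=
              Real.rpow_le_rpow_of_exponent_le (one_le_pow₀ (by norm_num)) hd1
          _ = (2:ℝ) ^ kap := Real.rpow_one _
    _ = 2 ^ kap * weight n lam kap x * (1 + ‖x - z‖ ^ kap) ^ (lam / kap) := by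
        unfold weight; rw [← hd]; ring

lemma weight_shift {n : ℕ} {lam : ℝ} {kap : ℕ} (hlam : 0 < lam) (hlk : lam ≤ (kap : ℝ))
    (x v : EuclideanSpace ℝ (Fin n)) (hv : ‖v‖ ≤ 1) :
    weight n lam kap (x + v) ≤ 2 ^ (kap + 1) * weight n lam kap x := by
  have hkpos : (0:ℝ) < (kap : ℝ) := lt_of_lt_of_le hlam hlk
  have hd0 : 0 < lam / kap := div_pos hlam hkpos
  have hd1 : lam / kap ≤ 1 := by rw [div_le_one hkpos]; exact hlk
  have h := weight_double hlam hlk x (x + v)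
  have hxz : x - (x + v) = -v := by abel
  rw [hxz, norm_neg] at h
  refine h.trans ?_
  have hvk : ‖v‖ ^ kap ≤ 1 := pow_le_one₀ (norm_nonneg v) hv
  have h2 : (1 + ‖v‖ ^ kap) ^ (lam / kap) ≤ 2 := by
    calc (1 + ‖v‖ ^ kap) ^ (lam / kap) ≤ (2:ℝ) ^ (lam / kap) :=
          Real.rpow_le_rpow (by positivity) (by linarith) hd0.le
      _ ≤ (2:ℝ) ^ (1:ℝ) := Real.rpow_le_rpow_of_exponent_le one_le_two hd1
      _ = 2 := Real.rpow_one 2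
  calc 2 ^ kap * weight n lam kap x * (1 + ‖v‖ ^ kap) ^ (lam / kap)
      ≤ 2 ^ kap * weight n lam kap x * 2 := by
        apply mul_le_mul_of_nonneg_left h2
        exact mul_nonneg (by positivity) (weight_pos x).le
    _ = 2 ^ (kap + 1) * weight n lam kap x := by rw [pow_succ]; ring

lemma weight_far {n : ℕ} {lam : ℝ} {kap : ℕ} (hlam : 0 < lam) (hlk : lam ≤ (kap : ℝ))
    (x v : EuclideanSpace ℝ (Fin n)) (hv : 1 ≤ ‖v‖) :
    weight n lam kap (x + v) ≤ 2 ^ (kap + 1) * weight n lam kap x * ‖v‖ ^ lam := by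
  have hkpos : (0:ℝ) < (kap : ℝ) := lt_of_lt_of_le hlam hlk
  have hkne : (kap : ℝ) ≠ 0 := hkpos.ne'
  have hd0 : 0 < lam / kap := div_pos hlam hkpos
  have hd1 : lam / kap ≤ 1 := by rw [div_le_one hkpos]; exact hlk
  have h := weight_double hlam hlk x (x + v)
  have hxz : x - (x + v) = -v := by abel
  rw [hxz, norm_neg] at h
  refine h.trans ?_
  have hvk : (1:ℝ) ≤ ‖v‖ ^ kap := one_le_pow₀ hv
  have h2 : (1 + ‖v‖ ^ kap) ^ (lam / kap) ≤ 2 * ‖v‖ ^ lam := by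
    have e1 : ((‖v‖ : ℝ) ^ (kap : ℕ)) ^ (lam / kap) = ‖v‖ ^ lam := by
      rw [← Real.rpow_natCast ‖v‖ kap, ← Real.rpow_mul (norm_nonneg v)]
      congr 1
      field_simp
    calc (1 + ‖v‖ ^ kap) ^ (lam / kap) ≤ (2 * ‖v‖ ^ kap) ^ (lam / kap) :=
          Real.rpow_le_rpow (by positivity) (by linarith) hd0.le
      _ = (2:ℝ) ^ (lam / kap) * ((‖v‖ ^ kap) ^ (lam / kap)) :=
          Real.mul_rpow (by norm_num) (by positivity)
      _ ≤ 2 * ‖v‖ ^ lam := by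
          rw [e1]
          apply mul_le_mul_of_nonneg_right _ (Real.rpow_nonneg (norm_nonneg v) lam)
          calc (2:ℝ) ^ (lam / kap) ≤ (2:ℝ) ^ (1:ℝ) :=
                Real.rpow_le_rpow_of_exponent_le one_le_two hd1
            _ = 2 := Real.rpow_one 2
  calc 2 ^ kap * weight n lam kap x * (1 + ‖v‖ ^ kap) ^ (lam / kap)
      ≤ 2 ^ kap * weight n lam kap x * (2 * ‖v‖ ^ lam) := by
        apply mul_le_mul_of_nonneg_left h2
        exact mul_nonneg (by positivity) (weight_pos x).le
    _ = 2 ^ (kap + 1) * weight n lam kap x * ‖v‖ ^ lam := by rw [pow_succ]; ring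

set_option maxHeartbeats 2000000 in
/-- Second-difference estimate along lines. -/
lemma near_bound {n : ℕ} {lam : ℝ} {kap : ℕ} (hlam : 0 < lam) (hlk : lam ≤ (kap : ℝ)) (hkap : 2 ≤ kap) (hke : Even kap) :
    ∃ K : ℝ, 0 ≤ K ∧ ∀ x y : EuclideanSpace ℝ (Fin n), ‖y‖ ≤ 1 →
      |2 * weight n lam kap x - weight n lam kap (x + y) - weight n lam kap (x - y)|
        ≤ K * weight n lam kap x * ‖y‖ ^ 2 := by
  classical
  have hkpos : (0:ℝ) < (kap : ℝ) := lt_of_lt_of_le hlam hlk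
  have hkne : (kap : ℝ) ≠ 0 := hkpos.ne'
  set d : ℝ := lam / kap with hd
  have hd0 : 0 < d := div_pos hlam hkpos
  have hd1 : d ≤ 1 := by rw [hd, div_le_one hkpos]; exact hlk
  obtain ⟨j, hj⟩ : ∃ j : ℕ, kap = 2 * (j + 1) := by
    obtain ⟨r, hr⟩ := hke
    have hr1 : 1 ≤ r := by omega
    exact ⟨r - 1, by omega⟩
  set m : ℕ := j + 1 with hm
  set mr : ℝ := (m : ℝ) with hmr
  set K0 : ℝ := d * ((d + 1) * 4 * mr ^ 2 + 6 * mr ^ 2) with hK0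
  refine ⟨2 * K0 * 2 ^ (kap + 1), by positivity, ?_⟩
  intro x y hy
  -- setup
  set a : ℝ := ‖x‖ ^ 2 with ha
  set b : ℝ := inner ℝ x y with hb
  set c : ℝ := ‖y‖ ^ 2 with hc
  have hc0 : 0 ≤ c := by positivity
  set p : ℝ → ℝ := fun t => a + (2 * b * t + c * t ^ 2) with hpdef
  have hpval : ∀ t : ℝ, p t = ‖x + t • y‖ ^ 2 := by
    intro t
    rw [norm_add_sq_real, real_inner_smul_right, norm_smul, mul_pow]
    simp only [hpdef, ha, hb, hc, Real.norm_eq_abs, sq_abs]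
    ring
  have hpnn : ∀ t : ℝ, 0 ≤ p t := fun t => by rw [hpval]; positivity
  set q1 : ℝ → ℝ := fun t => 2 * b + 2 * c * t with hq1def
  have hp : ∀ t : ℝ, HasDerivAt p (q1 t) t := by
    intro t
    have h := (((hasDerivAt_id t).const_mul (2 * b)).add
      ((hasDerivAt_pow 2 t).const_mul c)).const_add a
    refine h.congr_deriv ?_
    simp only [hq1def]
    push_cast
    ring
  have hCS : ∀ t : ℝ, (q1 t) ^ 2 ≤ 4 * p t * c := by
    intro t
    have h1 : q1 t = 2 * inner ℝ (x + t • y) y := by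
      rw [inner_add_left, real_inner_smul_left, real_inner_self_eq_norm_sq]
      simp only [hq1def, hb, hc]; ring
    have h2 := real_inner_mul_inner_self_le (x + t • y) y
    rw [real_inner_self_eq_norm_sq, real_inner_self_eq_norm_sq] at h2
    rw [h1, hpval, hc]
    nlinarith [h2]
  set u : ℝ → ℝ := fun t => 1 + p t ^ m with hudef
  have hu1le : ∀ t : ℝ, 1 ≤ u t := fun t => by
    simp only [hudef]; nlinarith [pow_nonneg (hpnn t) m]
  have hupos : ∀ t : ℝ, 0 < u t := fun t => lt_of_lt_of_le one_pos (hu1le t)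
  set u1 : ℝ → ℝ := fun t => (m : ℝ) * p t ^ (m - 1) * q1 t with hu1def
  have hu : ∀ t : ℝ, HasDerivAt u (u1 t) t := fun t => ((hp t).pow m).const_add 1
  set u2 : ℝ → ℝ := fun t =>
    ((m : ℝ) * (((m - 1 : ℕ) : ℝ) * p t ^ (m - 1 - 1) * q1 t)) * q1 t
      + ((m : ℝ) * p t ^ (m - 1)) * (2 * c * 1) with hu2def
  have hq1' : ∀ t : ℝ, HasDerivAt q1 (2 * c * 1) t := by
    intro t
    exact ((hasDerivAt_id t).const_mul (2 * c)).const_add (2 * b)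
  have hu1' : ∀ t : ℝ, HasDerivAt u1 (u2 t) t := by
    intro t
    exact (((hp t).pow (m - 1)).const_mul (m : ℝ)).mul (hq1' t)
  set φ : ℝ → ℝ := fun t => u t ^ (-d) with hφdef
  set φ1 : ℝ → ℝ := fun t => -d * u t ^ (-d - 1) * u1 t with hφ1def
  have hφ : ∀ t : ℝ, HasDerivAt φ (φ1 t) t := by
    intro t
    have h := (Real.hasDerivAt_rpow_const (x := u t) (p := -d)
      (Or.inl (hupos t).ne')).comp t (hu t)
    exact h
  set φ2 : ℝ → ℝ := fun t =>
    (-d * ((-d - 1) * u t ^ (-d - 1 - 1) * u1 t)) * u1 t + (-d * u t ^ (-d - 1)) * u2 t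
    with hφ2def
  have hφ1' : ∀ t : ℝ, HasDerivAt φ1 (φ2 t) t := by
    intro t
    have hA : HasDerivAt (fun s => -d * u s ^ (-d - 1))
        (-d * ((-d - 1) * u t ^ (-d - 1 - 1) * u1 t)) t := by
      have h := (Real.hasDerivAt_rpow_const (x := u t) (p := -d - 1)
        (Or.inl (hupos t).ne')).comp t (hu t)
      exact (h.const_mul (-d))
    exact hA.mul (hu1' t)

  -- identification of φ with the weight along the line
  have hφval : ∀ t : ℝ, φ t = weight n lam kap (x + t • y) := by
    intro t
    have hnorm : ‖x + t • y‖ ^ kap = p t ^ m := by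
      rw [hj, pow_mul, ← hpval]
    show (u t) ^ (-d) = weight n lam kap (x + t • y)
    rw [weight, hnorm, hudef, hd]
  have hw : ∀ s : ℝ, |s| ≤ 1 → u s ^ (-d) ≤ 2 ^ (kap + 1) * weight n lam kap x := by
    intro s hs
    have h1 : u s ^ (-d) = φ s := rfl
    rw [h1, hφval]
    refine weight_shift hlam hlk x (s • y) ?_
    rw [norm_smul, Real.norm_eq_abs]
    exact mul_le_one₀ hs (norm_nonneg y) hy
  set W : ℝ := 2 ^ (kap + 1) * weight n lam kap x with hW
  have hWpos : 0 < W := by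
    have := weight_pos (n := n) (lam := lam) (kap := kap) x
    positivity
  -- the key pointwise bound on the second derivative
  have hφ2b : ∀ s : ℝ, |s| ≤ 1 → |φ2 s| ≤ K0 * c * W := by
    intro s hs
    have hP : 0 ≤ p s := hpnn s
    have hU : 0 < u s := hupos s
    have hU1 : 1 ≤ u s := hu1le s
    have hq : (q1 s) ^ 2 ≤ 4 * p s * c := hCS s
    have hm1 : m - 1 = j := rfl
    have hm11 : m - 1 - 1 = j - 1 := rfl
    -- bound u1 squared
    have hPU : p s ^ (2 * j + 1) ≤ (u s) ^ 2 := by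
      have hUval : u s = 1 + p s ^ (j + 1) := by rw [hudef]
      rcases le_total (p s) 1 with h | h
      · have h1 : p s ^ (2 * j + 1) ≤ 1 := pow_le_one₀ hP h
        have h2 : 0 ≤ p s ^ (j + 1) := pow_nonneg hP _
        nlinarith
      · have h1 : p s ^ (2 * j + 1) ≤ p s ^ (2 * j + 2) := pow_le_pow_right₀ h (by omega)
        have h2 : p s ^ (2 * j + 2) = (p s ^ (j + 1)) ^ 2 := by
          rw [← pow_mul]; ring_nf
        have h3 : 0 ≤ p s ^ (j + 1) := pow_nonneg hP _
        nlinarith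
    have hPU2 : p s ^ j ≤ u s := by
      have hUval : u s = 1 + p s ^ (j + 1) := by rw [hudef]
      rcases le_total (p s) 1 with h | h
      · have h1 : p s ^ j ≤ 1 := pow_le_one₀ hP h
        have h2 : 0 ≤ p s ^ (j + 1) := pow_nonneg hP _
        nlinarith
      · have h1 : p s ^ j ≤ p s ^ (j + 1) := pow_le_pow_right₀ h (by omega)
        nlinarith
    have hu1sq : (u1 s) ^ 2 ≤ 4 * mr ^ 2 * c * (u s) ^ 2 := by
      have h1 : (u1 s) ^ 2 = mr ^ 2 * (p s ^ j) ^ 2 * (q1 s) ^ 2 := by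
        simp only [hu1def, hm1, hmr]; ring
      have h2 : (p s ^ j) ^ 2 = p s ^ (2 * j) := by rw [← pow_mul]; ring_nf
      have h3 : p s ^ (2 * j) * (p s) = p s ^ (2 * j + 1) := by rw [pow_succ]
      have h4 : (0:ℝ) ≤ mr ^ 2 := sq_nonneg _
      have h5 : (0:ℝ) ≤ p s ^ (2 * j) := pow_nonneg hP _
      calc (u1 s) ^ 2 = mr ^ 2 * p s ^ (2 * j) * (q1 s) ^ 2 := by rw [h1, h2]
        _ ≤ mr ^ 2 * p s ^ (2 * j) * (4 * p s * c) := by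
            apply mul_le_mul_of_nonneg_left hq (by positivity)
        _ = 4 * mr ^ 2 * c * p s ^ (2 * j + 1) := by rw [← h3]; ring
        _ ≤ 4 * mr ^ 2 * c * (u s) ^ 2 := by
            apply mul_le_mul_of_nonneg_left hPU (by positivity)
    -- bound u2
    have hu2nn : 0 ≤ u2 s := by
      have h1 : 0 ≤ ((m:ℝ) * (((m - 1 : ℕ) : ℝ) * p s ^ (m - 1 - 1) * q1 s)) * q1 s := by
        have : ((m:ℝ) * (((m - 1 : ℕ) : ℝ) * p s ^ (m - 1 - 1) * q1 s)) * q1 s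
            = (m:ℝ) * ((m - 1 : ℕ) : ℝ) * p s ^ (m - 1 - 1) * (q1 s) ^ 2 := by ring
        rw [this]
        have := pow_nonneg hP (m - 1 - 1)
        positivity
      have h2 : 0 ≤ ((m:ℝ) * p s ^ (m - 1)) * (2 * c * 1) := by
        have := pow_nonneg hP (m - 1)
        positivity
      simp only [hu2def]
      exact add_nonneg h1 h2
    have hu2b : u2 s ≤ 6 * mr ^ 2 * c * u s := by
      have hjterm : ((j:ℝ)) * p s ^ (j - 1) * (q1 s) ^ 2 ≤ 4 * (j:ℝ) * p s ^ j * c := by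
        cases j with
        | zero => simp
        | succ i =>
            have h1 : (i + 1 : ℕ) - 1 = i := rfl
            have h2 : p s ^ i * (4 * p s * c) = 4 * p s ^ (i + 1) * c := by
              rw [pow_succ]; ring
            have h3 : p s ^ i * (q1 s) ^ 2 ≤ p s ^ i * (4 * p s * c) :=
              mul_le_mul_of_nonneg_left hq (pow_nonneg hP _)
            have h4 : (0:ℝ) ≤ ((i:ℕ) + 1 : ℝ) := by positivity
            calc ((((i:ℕ) + 1 : ℕ) : ℝ)) * p s ^ ((i + 1 : ℕ) - 1) * (q1 s) ^ 2
                = (((i:ℕ) + 1 : ℝ)) * (p s ^ i * (q1 s) ^ 2) := by push_cast [h1]; ring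
              _ ≤ (((i:ℕ) + 1 : ℝ)) * (p s ^ i * (4 * p s * c)) := by
                  apply mul_le_mul_of_nonneg_left h3 h4
              _ = 4 * (((i + 1 : ℕ) : ℝ)) * p s ^ (i + 1) * c := by
                  rw [h2]; push_cast; ring
      have hcast : ((m - 1 : ℕ) : ℝ) = (j : ℝ) := by rw [hm1]
      have hrew : u2 s = mr * ((j:ℝ) * p s ^ (j - 1) * (q1 s) ^ 2) + 2 * mr * c * p s ^ j := by
        simp only [hu2def, hm1, hm11, hcast, hmr]; ring
      have hstep : u2 s ≤ mr * (4 * (j:ℝ) * p s ^ j * c) + 2 * mr * c * p s ^ j := by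
        rw [hrew]
        have hmr0 : (0:ℝ) ≤ mr := by rw [hmr]; positivity
        have := mul_le_mul_of_nonneg_left hjterm hmr0
        linarith
      have hcoef : mr * (4 * (j:ℝ)) + 2 * mr ≤ 6 * mr ^ 2 := by
        have hjm : (j : ℝ) = mr - 1 := by rw [hmr, hm]; push_cast; ring
        have hmr1 : 1 ≤ mr := by rw [hmr, hm]; push_cast; linarith [Nat.cast_nonneg (α := ℝ) j]
        rw [hjm]; nlinarith
      have hPjU : p s ^ j ≤ u s := hPU2
      have hPj0 : (0:ℝ) ≤ p s ^ j := pow_nonneg hP _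
      have hmr0 : (0:ℝ) ≤ mr := by rw [hmr]; positivity
      have hj0 : (0:ℝ) ≤ (j:ℝ) := Nat.cast_nonneg _
      calc u2 s ≤ mr * (4 * (j:ℝ) * p s ^ j * c) + 2 * mr * c * p s ^ j := hstep
        _ = (mr * (4 * (j:ℝ)) + 2 * mr) * (c * p s ^ j) := by ring
        _ ≤ (6 * mr ^ 2) * (c * p s ^ j) := by
            apply mul_le_mul_of_nonneg_right hcoef (by positivity)
        _ ≤ (6 * mr ^ 2) * (c * u s) := by
            apply mul_le_mul_of_nonneg_left _ (by positivity)
            exact mul_le_mul_of_nonneg_left hPjU hc0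
        _ = 6 * mr ^ 2 * c * u s := by ring
    -- rpow algebra
    have hUd2 : (u s) ^ (-d - 1 - 1) * (u s) ^ 2 = (u s) ^ (-d) := by
      rw [← Real.rpow_natCast (u s) 2, ← Real.rpow_add hU]
      congr 1
      push_cast
      ring
    have hUd1 : (u s) ^ (-d - 1) * u s = (u s) ^ (-d) := by
      nth_rewrite 2 [← Real.rpow_one (u s)]
      rw [← Real.rpow_add hU]
      congr 1
      ring
    have hUe2 : (0:ℝ) < (u s) ^ (-d - 1 - 1) := Real.rpow_pos_of_pos hU _
    have hUe1 : (0:ℝ) < (u s) ^ (-d - 1) := Real.rpow_pos_of_pos hU _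
    have hsplit : |φ2 s| ≤ d * (d + 1) * ((u s) ^ (-d - 1 - 1) * (u1 s) ^ 2)
        + d * ((u s) ^ (-d - 1) * u2 s) := by
      have h1 : φ2 s = (d * (d + 1) * ((u s) ^ (-d - 1 - 1) * (u1 s) ^ 2))
          - d * ((u s) ^ (-d - 1) * u2 s) := by
        simp only [hφ2def]; ring
      rw [h1]
      have h2 : 0 ≤ d * (d + 1) * ((u s) ^ (-d - 1 - 1) * (u1 s) ^ 2) := by positivity
      have h3 : 0 ≤ d * ((u s) ^ (-d - 1) * u2 s) := by
        apply mul_nonneg hd0.le (mul_nonneg hUe1.le hu2nn)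
      rw [abs_sub_comm]
      calc |d * ((u s) ^ (-d - 1) * u2 s) - d * (d + 1) * ((u s) ^ (-d - 1 - 1) * (u1 s) ^ 2)|
          ≤ |d * ((u s) ^ (-d - 1) * u2 s)| + |d * (d + 1) * ((u s) ^ (-d - 1 - 1) * (u1 s) ^ 2)| :=
            abs_sub _ _
        _ = d * ((u s) ^ (-d - 1) * u2 s) + d * (d + 1) * ((u s) ^ (-d - 1 - 1) * (u1 s) ^ 2) := by
            rw [abs_of_nonneg h3, abs_of_nonneg h2]
        _ = _ := by ring
    have hT1 : d * (d + 1) * ((u s) ^ (-d - 1 - 1) * (u1 s) ^ 2)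
        ≤ 4 * d * (d + 1) * mr ^ 2 * c * (u s) ^ (-d) := by
      calc d * (d + 1) * ((u s) ^ (-d - 1 - 1) * (u1 s) ^ 2)
          ≤ d * (d + 1) * ((u s) ^ (-d - 1 - 1) * (4 * mr ^ 2 * c * (u s) ^ 2)) := by
            apply mul_le_mul_of_nonneg_left _ (by positivity)
            exact mul_le_mul_of_nonneg_left hu1sq hUe2.le
        _ = 4 * d * (d + 1) * mr ^ 2 * c * ((u s) ^ (-d - 1 - 1) * (u s) ^ 2) := by ring
        _ = 4 * d * (d + 1) * mr ^ 2 * c * (u s) ^ (-d) := by rw [hUd2]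
    have hT2 : d * ((u s) ^ (-d - 1) * u2 s) ≤ 6 * d * mr ^ 2 * c * (u s) ^ (-d) := by
      calc d * ((u s) ^ (-d - 1) * u2 s)
          ≤ d * ((u s) ^ (-d - 1) * (6 * mr ^ 2 * c * u s)) := by
            apply mul_le_mul_of_nonneg_left _ hd0.le
            exact mul_le_mul_of_nonneg_left hu2b hUe1.le
        _ = 6 * d * mr ^ 2 * c * ((u s) ^ (-d - 1) * u s) := by ring
        _ = 6 * d * mr ^ 2 * c * (u s) ^ (-d) := by rw [hUd1]
    have hKform : |φ2 s| ≤ K0 * c * (u s) ^ (-d) := by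
      have := add_le_add hT1 hT2
      have hsum := hsplit.trans this
      calc |φ2 s| ≤ 4 * d * (d + 1) * mr ^ 2 * c * (u s) ^ (-d)
            + 6 * d * mr ^ 2 * c * (u s) ^ (-d) := hsum
        _ = K0 * c * (u s) ^ (-d) := by rw [hK0]; ring
    refine hKform.trans ?_
    apply mul_le_mul_of_nonneg_left (hw s hs) (by positivity)
  -- Taylor / mean value argument
  set g : ℝ → ℝ := fun t => φ t + φ (-t) - 2 * φ 0 with hgdef
  set g1 : ℝ → ℝ := fun t => φ1 t + φ1 (-t) * (-1) with hg1def
  set g2 : ℝ → ℝ := fun t => φ2 t + φ2 (-t) * (-1) * (-1) with hg2def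
  have hg : ∀ t : ℝ, HasDerivAt g (g1 t) t := by
    intro t
    exact ((hφ t).add (((hφ (-t)).comp t (hasDerivAt_neg t)))).sub_const (2 * φ 0)
  have hg1' : ∀ t : ℝ, HasDerivAt g1 (g2 t) t := by
    intro t
    exact (hφ1' t).add (((hφ1' (-t)).comp t (hasDerivAt_neg t)).mul_const (-1))
  set M : ℝ := 2 * (K0 * c * W) with hM
  have hM0 : 0 ≤ M := by
    have : 0 ≤ K0 * c * W := by positivity
    linarith
  have hg2b : ∀ s ∈ Set.Icc (0:ℝ) 1, ‖g2 s‖ ≤ M := by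
    intro s hs
    obtain ⟨hs0, hs1⟩ := hs
    have habs : |s| ≤ 1 := by rw [abs_of_nonneg hs0]; exact hs1
    have habs' : |(-s)| ≤ 1 := by rw [abs_neg]; exact habs
    have h1 := hφ2b s habs
    have h2 := hφ2b (-s) habs'
    rw [Real.norm_eq_abs]
    calc |g2 s| ≤ |φ2 s| + |φ2 (-s) * (-1) * (-1)| := abs_add_le _ _
      _ = |φ2 s| + |φ2 (-s)| := by rw [mul_neg_one, mul_neg_one, abs_neg, abs_neg]
      _ ≤ K0 * c * W + K0 * c * W := add_le_add h1 h2
      _ = M := by rw [hM]; ring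
  have hg1b : ∀ s ∈ Set.Icc (0:ℝ) 1, ‖g1 s‖ ≤ M := by
    have h0 := norm_image_sub_le_of_norm_deriv_le_segment'
      (f := g1) (f' := g2) (a := 0) (b := 1)
      (fun s hs => (hg1' s).hasDerivWithinAt)
      (fun s hs => hg2b s (Set.Ico_subset_Icc_self hs))
    intro s hs
    have := h0 s hs
    have hg10 : g1 0 = 0 := by simp only [hg1def]; rw [neg_zero]; ring
    rw [hg10, sub_zero] at this
    refine this.trans ?_
    have : s - 0 ≤ 1 := by linarith [hs.2]
    nlinarith [hs.1]
  have hgfin := norm_image_sub_le_of_norm_deriv_le_segment'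
    (f := g) (f' := g1) (a := 0) (b := 1)
    (fun s hs => (hg s).hasDerivWithinAt)
    (fun s hs => hg1b s (Set.Ico_subset_Icc_self hs))
    1 (by constructor <;> norm_num)
  have hg0 : g 0 = 0 := by simp only [hgdef]; rw [neg_zero]; ring
  rw [hg0, sub_zero] at hgfin
  have hgval : g 1 = weight n lam kap (x + y) + weight n lam kap (x - y)
      - 2 * weight n lam kap x := by
    simp only [hgdef]
    rw [hφval 1, hφval (-1), hφval 0]
    rw [one_smul, zero_smul, add_zero, neg_one_smul, ← sub_eq_add_neg]
  have hfinal : |2 * weight n lam kap x - weight n lam kap (x + y) - weight n lam kap (x - y)|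
      = |g 1| := by
    rw [hgval, ← abs_neg]; congr 1; ring
  rw [hfinal]
  have : ‖g 1‖ = |g 1| := Real.norm_eq_abs _
  rw [← this]
  refine hgfin.trans ?_
  rw [hM, hW, hc]
  ring_nf
  apply le_of_eq
  ring




set_option maxHeartbeats 1000000 in
theorem stmt_14 (n : ℕ) (hn : 1 ≤ n) (α : ℝ) (hα : α ∈ Set.Ioo (0 : ℝ) 2)
    (lam : ℝ) (hlam : lam ∈ Set.Ioo (0 : ℝ) 1)
    (kap : ℕ) (hkap : 2 ≤ kap) (hke : Even kap)
    (hcase : 1 ≤ α ∨ 2 * lam < α) :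
    (∃ C > 0, ∀ x : EuclideanSpace ℝ (Fin n),
      (∫⁻ y, ENNReal.ofReal
          (|2 * weight n lam kap x - weight n lam kap (x + y) - weight n lam kap (x - y)| /
            ‖y‖ ^ ((n : ℝ) + α))) ≤
        ENNReal.ofReal (C * weight n lam kap x)) ∧
    ∀ Cna : ℝ, 0 < Cna → ∃ C' > 0, ∀ x : EuclideanSpace ℝ (Fin n),
      MeasureTheory.Integrable
        (fun y : EuclideanSpace ℝ (Fin n) =>
          (2 * weight n lam kap x - weight n lam kap (x + y) - weight n lam kap (x - y)) /
            ‖y‖ ^ ((n : ℝ) + α))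
        MeasureTheory.volume ∧
      |Cna / 2 * ∫ y : EuclideanSpace ℝ (Fin n),
          (2 * weight n lam kap x - weight n lam kap (x + y) - weight n lam kap (x - y)) /
            ‖y‖ ^ ((n : ℝ) + α)| ≤ C' * weight n lam kap x := by
  obtain ⟨hα0, hα2⟩ := hα
  obtain ⟨hlam0, hlam1⟩ := hlam
  have hkR : (2:ℝ) ≤ (kap : ℝ) := by exact_mod_cast hkap
  have hlk : lam ≤ (kap : ℝ) := by linarith
  have hal : lam < α := by rcases hcase with h | h <;> linarith
  obtain ⟨K, hK0, hKnear⟩ := near_bound (n := n) hlam0 hlk hkap hke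
  have hnR : (1:ℝ) ≤ (n : ℝ) := by exact_mod_cast hn
  set w : EuclideanSpace ℝ (Fin n) → ℝ := weight n lam kap with hw
  set F : ℝ := 2 + 2 * 2 ^ (kap + 1) with hF
  have hFpos : 0 < F := by positivity
  set I1 : ℝ≥0∞ := ∫⁻ y : EuclideanSpace ℝ (Fin n) in ball 0 1,
    ENNReal.ofReal (‖y‖ ^ (2 - ((n : ℝ) + α))) with hI1def
  have hI1 : I1 < ∞ := finite_lintegral_rpow_norm_ball hn (by linarith)
  set r : ℝ := (n : ℝ) + α - lam with hr
  have hr0 : 0 < r := by rw [hr]; linarith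
  set I2 : ℝ≥0∞ := ∫⁻ y : EuclideanSpace ℝ (Fin n),
    ENNReal.ofReal ((1 + ‖y‖) ^ (-r)) with hI2def
  have hI2 : I2 < ∞ := by
    apply finite_integral_one_add_norm
    simp only [finrank_euclideanSpace, Fintype.card_fin]
    rw [hr]; linarith
  set C : ℝ := K * I1.toReal + F * 2 ^ ((n : ℝ) + α) * I2.toReal + 1 with hC
  have hCpos : 0 < C := by positivity
  have key : ∀ x : EuclideanSpace ℝ (Fin n),
      (∫⁻ y, ENNReal.ofReal
          (|2 * w x - w (x + y) - w (x - y)| / ‖y‖ ^ ((n : ℝ) + α))) ≤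
        ENNReal.ofReal (C * w x) := by
    intro x
    have hwx : 0 < w x := weight_pos x
    set f : EuclideanSpace ℝ (Fin n) → ℝ :=
      fun y => |2 * w x - w (x + y) - w (x - y)| / ‖y‖ ^ ((n : ℝ) + α) with hfdef
    have hsplit : (∫⁻ y, ENNReal.ofReal (f y)) =
        (∫⁻ y in ball (0 : EuclideanSpace ℝ (Fin n)) 1, ENNReal.ofReal (f y))
          + ∫⁻ y in (ball (0 : EuclideanSpace ℝ (Fin n)) 1)ᶜ, ENNReal.ofReal (f y) :=
      (lintegral_add_compl _ measurableSet_ball).symm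
    -- near piece
    have hnear_pt : ∀ y ∈ ball (0 : EuclideanSpace ℝ (Fin n)) 1,
        ENNReal.ofReal (f y) ≤
          ENNReal.ofReal (K * w x) * ENNReal.ofReal (‖y‖ ^ (2 - ((n : ℝ) + α))) := by
      intro y hyb
      rw [mem_ball_zero_iff] at hyb
      rw [← ENNReal.ofReal_mul (by positivity)]
      apply ENNReal.ofReal_le_ofReal
      rcases eq_or_ne y 0 with rfl | hy0
      · have h0 : f 0 = 0 := by
          simp only [hfdef, add_zero, sub_zero]
          rw [show |2 * w x - w x - w x| = 0 by rw [abs_eq_zero]; ring]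
          simp
        rw [h0]
        have : (0:ℝ) ≤ ‖(0 : EuclideanSpace ℝ (Fin n))‖ ^ (2 - ((n : ℝ) + α)) :=
          Real.rpow_nonneg (norm_nonneg _) _
        positivity
      · have hyn : (0:ℝ) < ‖y‖ := norm_pos_iff.mpr hy0
        have hden : (0:ℝ) < ‖y‖ ^ ((n : ℝ) + α) := Real.rpow_pos_of_pos hyn _
        have hnum := hKnear x y hyb.le
        calc f y ≤ (K * w x * ‖y‖ ^ 2) / ‖y‖ ^ ((n : ℝ) + α) := by
              simp only [hfdef]
              exact (div_le_div_iff_of_pos_right hden).mpr hnum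
          _ = K * w x * ‖y‖ ^ (2 - ((n : ℝ) + α)) := by
              rw [mul_div_assoc, ← Real.rpow_natCast ‖y‖ 2, ← Real.rpow_sub hyn]
              norm_num
    have hnear_int : (∫⁻ y in ball (0 : EuclideanSpace ℝ (Fin n)) 1, ENNReal.ofReal (f y))
        ≤ ENNReal.ofReal (K * I1.toReal * w x) := by
      calc (∫⁻ y in ball (0 : EuclideanSpace ℝ (Fin n)) 1, ENNReal.ofReal (f y))
          ≤ ∫⁻ y in ball (0 : EuclideanSpace ℝ (Fin n)) 1,
              ENNReal.ofReal (K * w x) * ENNReal.ofReal (‖y‖ ^ (2 - ((n : ℝ) + α))) :=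
            setLIntegral_mono' measurableSet_ball hnear_pt
        _ = ENNReal.ofReal (K * w x) * I1 := by
            rw [hI1def, lintegral_const_mul' _ _ ENNReal.ofReal_ne_top]
        _ = ENNReal.ofReal (K * w x) * ENNReal.ofReal I1.toReal := by
            rw [ENNReal.ofReal_toReal hI1.ne]
        _ = ENNReal.ofReal (K * w x * I1.toReal) := by
            rw [← ENNReal.ofReal_mul (by positivity)]
        _ = ENNReal.ofReal (K * I1.toReal * w x) := by ring_nf
    -- far piece
    have hfar_pt : ∀ y ∈ (ball (0 : EuclideanSpace ℝ (Fin n)) 1)ᶜ,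
        ENNReal.ofReal (f y) ≤
          ENNReal.ofReal (F * 2 ^ ((n : ℝ) + α) * w x) * ENNReal.ofReal ((1 + ‖y‖) ^ (-r)) := by
      intro y hyc
      have hy1 : 1 ≤ ‖y‖ := by
        simp only [mem_compl_iff, mem_ball_zero_iff, not_lt] at hyc
        exact hyc
      have hyn : (0:ℝ) < ‖y‖ := by linarith
      rw [← ENNReal.ofReal_mul (by positivity)]
      apply ENNReal.ofReal_le_ofReal
      have h1 : w (x + y) ≤ 2 ^ (kap + 1) * w x * ‖y‖ ^ lam := weight_far hlam0 hlk x y hy1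
      have h2 : w (x - y) ≤ 2 ^ (kap + 1) * w x * ‖y‖ ^ lam := by
        have hy1' : 1 ≤ ‖(-y : EuclideanSpace ℝ (Fin n))‖ := by rwa [norm_neg]
        have := weight_far hlam0 hlk x (-y) hy1'
        rw [← sub_eq_add_neg, norm_neg] at this
        exact this
      have h3 : (1:ℝ) ≤ ‖y‖ ^ lam := by
        calc (1:ℝ) = (1:ℝ) ^ lam := (Real.one_rpow lam).symm
          _ ≤ ‖y‖ ^ lam := Real.rpow_le_rpow zero_le_one hy1 hlam0.le
      have hw1 : 0 < w (x + y) := weight_pos _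
      have hw2 : 0 < w (x - y) := weight_pos _
      have hDelta : |2 * w x - w (x + y) - w (x - y)| ≤ F * w x * ‖y‖ ^ lam := by
        rw [abs_le]
        have hpow : (0:ℝ) < 2 ^ (kap + 1) := by positivity
        constructor
        · rw [hF]; nlinarith
        · rw [hF]; nlinarith
      have hden : (0:ℝ) < ‖y‖ ^ ((n : ℝ) + α) := Real.rpow_pos_of_pos hyn _
      have hyr : ‖y‖ ^ (-r) ≤ 2 ^ ((n : ℝ) + α) * (1 + ‖y‖) ^ (-r) := by
        have hhalf : (1 + ‖y‖) / 2 ≤ ‖y‖ := by linarith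
        have h5 : (0:ℝ) < (1 + ‖y‖) / 2 := by linarith
        have h6 : ‖y‖ ^ (-r) ≤ ((1 + ‖y‖) / 2) ^ (-r) :=
          Real.rpow_le_rpow_of_nonpos h5 hhalf (by linarith)
        have h7 : ((1 + ‖y‖) / 2) ^ (-r) = (1 + ‖y‖) ^ (-r) * 2 ^ r := by
          rw [Real.div_rpow (by linarith) (by norm_num) (-r)]
          rw [Real.rpow_neg (by norm_num : (0:ℝ) ≤ 2)]
          field_simp
        have h8 : (2:ℝ) ^ r ≤ 2 ^ ((n : ℝ) + α) :=
          Real.rpow_le_rpow_of_exponent_le one_le_two (by rw [hr]; linarith)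
        have h9 : (0:ℝ) ≤ (1 + ‖y‖) ^ (-r) := Real.rpow_nonneg (by linarith) _
        calc ‖y‖ ^ (-r) ≤ (1 + ‖y‖) ^ (-r) * 2 ^ r := h6.trans_eq h7
          _ ≤ (1 + ‖y‖) ^ (-r) * 2 ^ ((n : ℝ) + α) := mul_le_mul_of_nonneg_left h8 h9
          _ = 2 ^ ((n : ℝ) + α) * (1 + ‖y‖) ^ (-r) := mul_comm _ _
      calc f y ≤ (F * w x * ‖y‖ ^ lam) / ‖y‖ ^ ((n : ℝ) + α) := by
            simp only [hfdef]
            exact (div_le_div_iff_of_pos_right hden).mpr hDelta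
        _ = F * w x * ‖y‖ ^ (lam - ((n : ℝ) + α)) := by
            rw [mul_div_assoc, ← Real.rpow_sub hyn]
        _ = F * w x * ‖y‖ ^ (-r) := by rw [show lam - ((n : ℝ) + α) = -r by rw [hr]; ring]
        _ ≤ F * w x * (2 ^ ((n : ℝ) + α) * (1 + ‖y‖) ^ (-r)) := by
            apply mul_le_mul_of_nonneg_left hyr (by positivity)
        _ = F * 2 ^ ((n : ℝ) + α) * w x * (1 + ‖y‖) ^ (-r) := by ring
    have hfar_int : (∫⁻ y in (ball (0 : EuclideanSpace ℝ (Fin n)) 1)ᶜ, ENNReal.ofReal (f y))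
        ≤ ENNReal.ofReal (F * 2 ^ ((n : ℝ) + α) * I2.toReal * w x) := by
      calc (∫⁻ y in (ball (0 : EuclideanSpace ℝ (Fin n)) 1)ᶜ, ENNReal.ofReal (f y))
          ≤ ∫⁻ y in (ball (0 : EuclideanSpace ℝ (Fin n)) 1)ᶜ,
              ENNReal.ofReal (F * 2 ^ ((n : ℝ) + α) * w x) * ENNReal.ofReal ((1 + ‖y‖) ^ (-r)) :=
            setLIntegral_mono' measurableSet_ball.compl hfar_pt
        _ ≤ ∫⁻ y, ENNReal.ofReal (F * 2 ^ ((n : ℝ) + α) * w x)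
              * ENNReal.ofReal ((1 + ‖y‖) ^ (-r)) := setLIntegral_le_lintegral _ _
        _ = ENNReal.ofReal (F * 2 ^ ((n : ℝ) + α) * w x) * I2 := by
            rw [hI2def, lintegral_const_mul' _ _ ENNReal.ofReal_ne_top]
        _ = ENNReal.ofReal (F * 2 ^ ((n : ℝ) + α) * w x) * ENNReal.ofReal I2.toReal := by
            rw [ENNReal.ofReal_toReal hI2.ne]
        _ = ENNReal.ofReal (F * 2 ^ ((n : ℝ) + α) * w x * I2.toReal) := by
            rw [← ENNReal.ofReal_mul (by positivity)]
        _ = ENNReal.ofReal (F * 2 ^ ((n : ℝ) + α) * I2.toReal * w x) := by ring_nf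
    calc (∫⁻ y, ENNReal.ofReal (f y))
        = (∫⁻ y in ball (0 : EuclideanSpace ℝ (Fin n)) 1, ENNReal.ofReal (f y))
          + ∫⁻ y in (ball (0 : EuclideanSpace ℝ (Fin n)) 1)ᶜ, ENNReal.ofReal (f y) := hsplit
      _ ≤ ENNReal.ofReal (K * I1.toReal * w x)
          + ENNReal.ofReal (F * 2 ^ ((n : ℝ) + α) * I2.toReal * w x) :=
          add_le_add hnear_int hfar_int
      _ = ENNReal.ofReal ((K * I1.toReal + F * 2 ^ ((n : ℝ) + α) * I2.toReal) * w x) := by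
          rw [← ENNReal.ofReal_add (by positivity) (by positivity)]
          ring_nf
      _ ≤ ENNReal.ofReal (C * w x) := by
          apply ENNReal.ofReal_le_ofReal
          rw [hC]
          nlinarith
  refine ⟨⟨C, hCpos, key⟩, ?_⟩
  intro Cna hCna
  refine ⟨Cna / 2 * C, by positivity, fun x => ?_⟩
  have hwx : 0 < w x := weight_pos x
  set g : EuclideanSpace ℝ (Fin n) → ℝ :=
    fun y => (2 * w x - w (x + y) - w (x - y)) / ‖y‖ ^ ((n : ℝ) + α) with hgdef
  have hwcont : Continuous w := by
    rw [hw]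
    unfold weight
    exact (continuous_const.add (continuous_norm.pow kap)).rpow_const
      (fun z => Or.inl (by show (1:ℝ) + ‖z‖ ^ kap ≠ 0; positivity))
  have hnumc : Continuous fun y : EuclideanSpace ℝ (Fin n) =>
      2 * w x - w (x + y) - w (x - y) :=
    (continuous_const.sub (hwcont.comp (continuous_const.add continuous_id))).sub
      (hwcont.comp (continuous_const.sub continuous_id))
  have hdenc : Continuous fun y : EuclideanSpace ℝ (Fin n) => ‖y‖ ^ ((n : ℝ) + α) :=
    continuous_norm.rpow_const (fun y => Or.inr (by positivity))
  have hgmeas : Measurable g := hnumc.measurable.div hdenc.measurable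
  have hnorm_eq : ∀ y : EuclideanSpace ℝ (Fin n), (‖g y‖₊ : ℝ≥0∞) =
      ENNReal.ofReal (|2 * w x - w (x + y) - w (x - y)| / ‖y‖ ^ ((n : ℝ) + α)) := by
    intro y
    rw [← enorm_eq_nnnorm, Real.enorm_eq_ofReal_abs, hgdef]
    congr 1
    rw [abs_div, abs_of_nonneg (Real.rpow_nonneg (norm_nonneg y) _)]
  have hfin : HasFiniteIntegral g volume := by
    rw [hasFiniteIntegral_def]
    calc (∫⁻ y, (‖g y‖₊ : ℝ≥0∞)) = ∫⁻ y, ENNReal.ofReal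
          (|2 * w x - w (x + y) - w (x - y)| / ‖y‖ ^ ((n : ℝ) + α)) := by
          exact lintegral_congr hnorm_eq
      _ ≤ ENNReal.ofReal (C * w x) := key x
      _ < ∞ := ENNReal.ofReal_lt_top
  have hInt : Integrable g volume := ⟨hgmeas.aestronglyMeasurable, hfin⟩
  refine ⟨hInt, ?_⟩
  have habs_int : (∫ y, |g y|) ≤ C * w x := by
    have h2 := ofReal_integral_eq_lintegral_ofReal hInt.abs
      (Eventually.of_forall fun y => abs_nonneg (g y))
    have h3 : (∫⁻ y, ENNReal.ofReal |g y|) ≤ ENNReal.ofReal (C * w x) := by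
      calc (∫⁻ y, ENNReal.ofReal |g y|) = ∫⁻ y, (‖g y‖₊ : ℝ≥0∞) := by
            refine lintegral_congr fun y => ?_
            rw [← enorm_eq_nnnorm, Real.enorm_eq_ofReal_abs]
        _ = ∫⁻ y, ENNReal.ofReal
              (|2 * w x - w (x + y) - w (x - y)| / ‖y‖ ^ ((n : ℝ) + α)) :=
            lintegral_congr hnorm_eq
        _ ≤ ENNReal.ofReal (C * w x) := key x
    rw [← ENNReal.ofReal_le_ofReal_iff (by positivity)]
    calc ENNReal.ofReal (∫ y, |g y|) = ∫⁻ y, ENNReal.ofReal |g y| := h2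
      _ ≤ ENNReal.ofReal (C * w x) := h3
  calc |Cna / 2 * ∫ y, g y| = Cna / 2 * |∫ y, g y| := by
        rw [abs_mul, abs_of_pos (by linarith : (0:ℝ) < Cna / 2)]
    _ ≤ Cna / 2 * ∫ y, |g y| := by
        apply mul_le_mul_of_nonneg_left _ (by linarith : (0:ℝ) ≤ Cna / 2)
        have := norm_integral_le_integral_norm (μ := volume) g
        simpa [Real.norm_eq_abs] using this
    _ ≤ Cna / 2 * (C * w x) := by
        apply mul_le_mul_of_nonneg_left habs_int (by linarith : (0:ℝ) ≤ Cna / 2)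
    _ = Cna / 2 * C * w x := by ring
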